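/- Let λ₁ > λ₂ > ... > λ_m > 0 be distinct positive reals, Λ = diag(λ), V the m×n Vandermonde matrix with columns 𝟙, Λ𝟙, ..., Λ^{n-1}𝟙, and τ ⊆ {1,...,m} a subset of size n with selection matrix S_τ. Then the matrix S_τᵀ Λ V is invertible, and the vector ω = Λ V (S_τᵀ Λ V)⁻¹ 𝟙 satisfies ω_i = 1 - ∏_{j ∈ τ} (1 - λ_i/λ_j) for every i = 1,...,m. -/

import Mathlib

open Finset Matrix Polynomial

/-- The n×n matrix `S_τᵀ Λ V` obtained by selecting the rows of `Λ V` indexed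
by the size-`n` subset `τ`; its `(a,b)` entry is `λ_{τ(a)}^{b+1}`. -/
noncomputable def selLV {m : ℕ} (l : Fin m → ℝ) (n : ℕ) (τ : Finset (Fin m))
    (h : τ.card = n) : Matrix (Fin n) (Fin n) ℝ :=
  Matrix.of fun a b => l (τ.orderEmbOfFin h a) ^ ((b : ℕ) + 1)

theorem stmt0 {m n : ℕ} (l : Fin m → ℝ) (hpos : ∀ i, 0 < l i) (hanti : StrictAnti l)
    (τ : Finset (Fin m)) (hτ : τ.card = n) :
    IsUnit (selLV l n τ hτ).det ∧
      ∀ i : Fin m,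
        (∑ j : Fin n, l i ^ ((j : ℕ) + 1) * ((selLV l n τ hτ)⁻¹ *ᵥ (fun _ => 1)) j) =
          1 - ∏ j ∈ τ, (1 - l i / l j) := by
  classical
  set e := τ.orderEmbOfFin hτ with he
  set x : Fin n → ℝ := fun a => l (e a) with hx
  have hlinj : Function.Injective l := hanti.injective
  have hxinj : Function.Injective x := fun a b hab => (e.injective (hlinj hab))
  have hfact : selLV l n τ hτ = Matrix.diagonal x * Matrix.vandermonde x := by
    ext a b
    simp [selLV, Matrix.vandermonde, Matrix.diagonal_mul, pow_succ', hx, he]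
  have hdet : (selLV l n τ hτ).det ≠ 0 := by
    rw [hfact, Matrix.det_mul, Matrix.det_diagonal, Matrix.det_vandermonde]
    apply mul_ne_zero
    · exact Finset.prod_ne_zero_iff.2 fun a _ => (hpos _).ne'
    · refine Finset.prod_ne_zero_iff.2 fun a _ => Finset.prod_ne_zero_iff.2 fun b hb => ?_
      exact sub_ne_zero.2 fun h => (Finset.mem_Ioi.1 hb).ne' (hxinj h)
  have hunit : IsUnit (selLV l n τ hτ).det := isUnit_iff_ne_zero.2 hdet
  refine ⟨hunit, ?_⟩
  set c : Fin n → ℝ := (selLV l n τ hτ)⁻¹ *ᵥ (fun _ => 1) with hcdef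
  have hsolve : selLV l n τ hτ *ᵥ c = fun _ => 1 := by
    rw [hcdef, Matrix.mulVec_mulVec, Matrix.mul_nonsing_inv _ hunit, Matrix.one_mulVec]
  have hc : ∀ a : Fin n, ∑ b : Fin n, x a ^ ((b : ℕ) + 1) * c b = 1 := by
    intro a
    have := congrFun hsolve a
    simpa [Matrix.mulVec, dotProduct, selLV, hx, he] using this
  set P : ℝ[X] := (∑ j : Fin n, C (c j) * X ^ ((j : ℕ) + 1)) -
      (1 - ∏ j ∈ τ, (1 - C (l j)⁻¹ * X)) with hP
  have hdeg : P.natDegree ≤ n := by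
    refine (natDegree_sub_le _ _).trans (max_le ?_ ((natDegree_sub_le _ _).trans (max_le ?_ ?_)))
    · refine natDegree_sum_le_of_forall_le _ _ fun j _ => ?_
      refine (natDegree_C_mul_le _ _).trans ?_
      rw [natDegree_X_pow]; exact j.isLt
    · simp
    · refine (natDegree_prod_le _ _).trans ?_
      calc ∑ j ∈ τ, (1 - C (l j)⁻¹ * X).natDegree ≤ ∑ j ∈ τ, 1 := by
            refine Finset.sum_le_sum fun j _ => ?_
            refine (natDegree_sub_le _ _).trans (max_le (by simp) ?_)
            exact (natDegree_C_mul_le _ _).trans (by simp)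
        _ = n := by simp [hτ]
  set s : Finset ℝ := insert 0 (τ.image l) with hs
  have hcard : s.card = n + 1 := by
    rw [hs, Finset.card_insert_of_notMem, Finset.card_image_of_injective _ hlinj, hτ]
    simp only [Finset.mem_image, not_exists]
    rintro j ⟨hj, h0⟩
    exact absurd h0 (hpos j).ne'
  have heval : ∀ y ∈ s, P.eval y = 0 := by
    intro y hy
    rcases Finset.mem_insert.1 hy with rfl | hy
    · simp [hP, eval_finset_sum, eval_prod]
    · obtain ⟨k, hk, rfl⟩ := Finset.mem_image.1 hy
      obtain ⟨a, ha⟩ : ∃ a, e a = k := by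
        have : k ∈ Set.range e := by rw [Finset.range_orderEmbOfFin]; exact hk
        exact this
      have hprod : (∏ j ∈ τ, (1 - C (l j)⁻¹ * X)).eval (l k) = 0 := by
        rw [eval_prod]
        refine Finset.prod_eq_zero hk ?_
        simp [inv_mul_cancel₀ (hpos k).ne']
      have hsum : (∑ j : Fin n, C (c j) * X ^ ((j : ℕ) + 1)).eval (l k) = 1 := by
        rw [eval_finset_sum]
        simp only [eval_mul, eval_C, eval_pow, eval_X]
        rw [← hc a]
        refine Finset.sum_congr rfl fun j _ => ?_
        rw [← ha]; ring
      simp [hP, hsum, hprod]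
  have hP0 : P = 0 :=
    eq_zero_of_natDegree_lt_card_of_eval_eq_zero' P s heval (by omega)
  intro i
  have := congrArg (eval (l i)) hP0
  simp only [hP, eval_sub, eval_one, eval_finset_sum, eval_mul, eval_C, eval_pow, eval_X,
    eval_prod, eval_zero, sub_eq_zero] at this
  rw [show (∑ j : Fin n, l i ^ ((j : ℕ) + 1) * c j) = ∑ j : Fin n, c j * l i ^ ((j : ℕ) + 1) from
    Finset.sum_congr rfl fun j _ => mul_comm _ _, this]
  congr 1
  refine Finset.prod_congr rfl fun j _ => ?_
  rw [div_eq_mul_inv, mul_comm]
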